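/- Let (K, v) be a Henselian discrete valued field with char(K) = 0, char(K̂) = p > 0, λ ∈ K with π = λ − 1, v(π) > 0 and (p − 1)·v(π) < p·v(p). Suppose π = π₁^p·a with π₁ ∈ K and a a unit of O_v(K) whose residue â is not a p-th power in K̂. Then λ ∉ K^{*p}, and the field K′ obtained by adjoining a p-th root of λ satisfies: â ∈ (K̂′)^p and K̂′/K̂ is a purely inseparable extension of degree p. -/

import Mathlib

noncomputable section

open IsLocalRing

local notation "ℤᵐ⁰" => WithZero (Multiplicative ℤ)

/-- The value group of a valuation on a field `K`, as a subgroup of the units of the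
value monoid: the subgroup generated by the values of nonzero elements of `K`. -/
def valGroup {K Γ : Type*} [Field K] [LinearOrderedCommGroupWithZero Γ]
    (v : Valuation K Γ) : Subgroup Γˣ :=
  Subgroup.closure { g : Γˣ | ∃ x : K, x ≠ 0 ∧ v x = ↑g }

/-- The subfield of `p`-th powers of a field `k` (for `k` of characteristic `p` this is
the image of the Frobenius). -/
def pthPowers (k : Type*) [Field k] (p : ℕ) : Subfield k :=
  Subfield.closure { y : k | ∃ x : k, x ^ p = y }

/- ## Auxiliary lemmas -/

lemma aux_pow_inj {Γ : Type*} [LinearOrderedCommGroupWithZero Γ] {x y : Γ} {n : ℕ} (hn : n ≠ 0)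
    (h : x ^ n = y ^ n) : x = y := by
  rcases lt_trichotomy x y with hlt | he | hgt
  · exact absurd h (pow_lt_pow_left₀ hlt zero_le' hn).ne
  · exact he
  · exact absurd h.symm (pow_lt_pow_left₀ hgt zero_le' hn).ne

lemma aux_v_natCast_le_one {K Γ : Type*} [Field K] [LinearOrderedCommGroupWithZero Γ]
    (v : Valuation K Γ) (n : ℕ) : v (n : K) ≤ 1 := by
  induction n with
  | zero => simp
  | succ n ih =>
      push_cast
      exact le_trans (v.map_add _ _) (max_le ih (le_of_eq v.map_one))

lemma aux_residue_eq_zero_iff {L : Type*} [Field L] (w : Valuation L ℤᵐ⁰) (x : w.integer) :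
    residue w.integer x = 0 ↔ w (x : L) < 1 := by
  rw [IsLocalRing.residue_eq_zero_iff, IsLocalRing.mem_maximalIdeal, mem_nonunits_iff]
  rw [(Valuation.integer.integers (v := w)).isUnit_iff_valuation_eq_one]
  constructor
  · intro h
    exact lt_of_le_of_ne x.2 h
  · intro h h'
    exact absurd h' h.ne

/-- If `z ^ p = μ` where `μ` has residue `1`, then `z - 1` lies in the maximal ideal. -/
lemma aux_t_small {L : Type*} [Field L] {p : ℕ} (hp : p.Prime) (w : Valuation L ℤᵐ⁰)
    [CharP (ResidueField w.integer) p]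
    (μ z : L) (hμ : w (μ - 1) < 1) (hz : z ^ p = μ) : w (z - 1) < 1 := by
  haveI := Fact.mk hp
  have hμ1 : w μ = 1 := by
    have h : μ = 1 + (μ - 1) := by ring
    rw [h]
    exact w.map_one_add_of_lt hμ
  have hz1 : w z = 1 := by
    refine aux_pow_inj hp.ne_zero (y := (1 : ℤᵐ⁰)) ?_
    rw [one_pow, ← Valuation.map_pow, hz, hμ1]
  set Z : w.integer := ⟨z, hz1.le⟩ with hZ
  set M : w.integer := ⟨μ, hμ1.le⟩ with hM
  have hresM : residue w.integer M = 1 := by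
    have h0 : residue w.integer (M - 1) = 0 := by
      rw [aux_residue_eq_zero_iff]
      simpa using hμ
    rwa [map_sub, map_one, sub_eq_zero] at h0
  have hZM : Z ^ p = M := by
    apply Subtype.ext
    push_cast
    exact hz
  have hres : residue w.integer Z ^ p = 1 := by
    rw [← map_pow, hZM, hresM]
  have h1 : (residue w.integer Z - 1) ^ p = 0 := by
    rw [sub_pow_char, hres, one_pow, sub_self]
  have h2 : residue w.integer Z = 1 := by
    have h := pow_eq_zero_iff hp.ne_zero |>.mp h1
    rwa [sub_eq_zero] at h
  have h3 : residue w.integer (Z - 1) = 0 := by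
    rw [map_sub, map_one, h2, sub_self]
  rw [aux_residue_eq_zero_iff] at h3
  simpa using h3

/-- Key valuation computation. -/
lemma aux_key {L : Type*} [Field L] {p : ℕ} (hp : p.Prime) (w : Valuation L ℤᵐ⁰)
    (μ t : L) (hμ : (1 + t) ^ p = μ)
    (hb : w (p : L) ^ p < w (μ - 1) ^ (p - 1))
    (ht : w t < 1) :
    w t ^ p = w (μ - 1) ∧ w ((μ - 1) - t ^ p) < w (μ - 1) := by
  have hp1 : 1 ≤ p := hp.one_lt.le
  have hpm1 : p - 1 ≠ 0 := Nat.sub_ne_zero_of_lt hp.one_lt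
  set S : L := ∑ k ∈ Finset.Ico 1 p, t ^ (p - k) * (p.choose k : L) with hS
  have hexp : μ - 1 = t ^ p + S := by
    have h1 : ((1:L) + t) ^ p = ∑ k ∈ Finset.range (p + 1), t ^ (p - k) * (p.choose k : L) := by
      rw [add_pow]
      exact Finset.sum_congr rfl (fun k _ => by rw [one_pow, one_mul])
    have h2 : ∑ k ∈ Finset.range (p + 1), t ^ (p - k) * (p.choose k : L)
        = (∑ k ∈ Finset.range p, t ^ (p - k) * (p.choose k : L)) + 1 := by
      rw [Finset.sum_range_succ]; simp
    have h3 : ∑ k ∈ Finset.range p, t ^ (p - k) * (p.choose k : L) = t ^ p + S := by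
      rw [Finset.range_eq_Ico, Finset.sum_eq_sum_Ico_succ_bot hp.pos]
      simp [hS]
    rw [← hμ, h1, h2, h3]; ring
  have hSle : w S ≤ w (p : L) * w t := by
    apply Valuation.map_sum_le
    intro k hk
    obtain ⟨hk1, hk2⟩ := Finset.mem_Ico.mp hk
    obtain ⟨m, hm⟩ := hp.dvd_choose_self (by omega) hk2
    have hpk : 1 ≤ p - k := by omega
    calc w (t ^ (p - k) * (p.choose k : L))
        = w t ^ (p - k) * w (p.choose k : L) := by rw [Valuation.map_mul, Valuation.map_pow]
      _ = w t ^ (p - k) * (w (p : L) * w (m : L)) := by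
          rw [hm]; push_cast; rw [Valuation.map_mul]
      _ ≤ w t ^ 1 * (w (p : L) * 1) := by
          refine mul_le_mul' (pow_le_pow_right_of_le_one' ht.le hpk)
            (mul_le_mul' le_rfl (aux_v_natCast_le_one w m))
      _ = w (p : L) * w t := by rw [pow_one, mul_one, mul_comm]
  rcases le_or_gt (w t ^ (p - 1)) (w (p : L)) with hA | hB
  · exfalso
    have hπle : w (μ - 1) ≤ w (p : L) * w t := by
      rw [hexp]
      refine le_trans (w.map_add _ _) (max_le ?_ hSle)
      calc w (t ^ p) = w t ^ (p - 1) * w t ^ 1 := by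
            rw [Valuation.map_pow, ← pow_add]; congr 1; omega
        _ ≤ w (p : L) * w t := by rw [pow_one]; gcongr
    have : w (μ - 1) ^ (p - 1) ≤ w (p : L) ^ p := by
      calc w (μ - 1) ^ (p - 1) ≤ (w (p : L) * w t) ^ (p - 1) := by gcongr
        _ = w (p : L) ^ (p - 1) * w t ^ (p - 1) := mul_pow _ _ _
        _ ≤ w (p : L) ^ (p - 1) * w (p : L) ^ 1 := by rw [pow_one]; gcongr
        _ = w (p : L) ^ p := by rw [← pow_add]; congr 1; omega
    exact absurd hb this.not_gt
  · have ht0 : w t ≠ 0 := by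
      intro h0
      rw [h0, zero_pow hpm1] at hB
      exact absurd hB (zero_le').not_gt
    have hSlt : w S < w (t ^ p) := by
      refine lt_of_le_of_lt hSle ?_
      calc w (p : L) * w t < w t ^ (p - 1) * w t := by
            exact mul_lt_mul_of_pos_right hB (lt_of_le_of_ne zero_le' (Ne.symm ht0))
        _ = w (t ^ p) := by rw [Valuation.map_pow, ← pow_succ]; congr 1; omega
    have hπ : w (μ - 1) = w (t ^ p) := by
      rw [hexp, add_comm]; exact Valuation.map_add_eq_of_lt_right _ hSlt
    refine ⟨by rw [hπ, Valuation.map_pow], ?_⟩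
    have : (μ - 1) - t ^ p = S := by rw [hexp]; ring
    rw [this, hπ]
    exact hSlt

/-- From `π = π₁ ^ p * b`, `w t ^ p = w π`, `w (π - t ^ p) < w π`, produce a unit whose
residue's `p`-th power is the residue of `b`. -/
lemma aux_exists_res_pow {L : Type*} [Field L] {p : ℕ} (hp : 0 < p) (w : Valuation L ℤᵐ⁰)
    (π π₁ t : L) (b : w.integer) (hwb : w (b : L) = 1)
    (hfacw : π = π₁ ^ p * (b : L)) (hπ0 : π ≠ 0)
    (hπt : w t ^ p = w π) (hlt : w (π - t ^ p) < w π) :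
    ∃ U : w.integer, residue w.integer U ^ p = residue w.integer b ∧ w (U : L) = 1 := by
  have hπ₁0 : π₁ ≠ 0 := by
    rintro rfl
    rw [zero_pow hp.ne', zero_mul] at hfacw
    exact hπ0 hfacw
  have hwπ : w π = w π₁ ^ p := by
    rw [hfacw, Valuation.map_mul, hwb, mul_one, Valuation.map_pow]
  have hwt : w t = w π₁ := aux_pow_inj hp.ne' (by rw [hπt, hwπ])
  have hwπ₁0 : w π₁ ≠ 0 := by simpa using hπ₁0
  set u : L := t / π₁ with hu
  have hwu : w u = 1 := by
    rw [hu, Valuation.map_div, hwt, div_self hwπ₁0]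
  refine ⟨⟨u, hwu.le⟩, ?_, hwu⟩
  have hsub : w ((⟨u, hwu.le⟩ : w.integer) ^ p - b : w.integer) < 1 := by
    have hcoe : ((⟨u, hwu.le⟩ : w.integer) ^ p - b : w.integer) = (u ^ p - (b : L) : L) := by
      push_cast; ring
    rw [hcoe]
    have heq : u ^ p - (b : L) = (t ^ p - π) / π₁ ^ p := by
      rw [hu, div_pow, hfacw]
      field_simp
    rw [heq, Valuation.map_div, Valuation.map_pow, ← hwπ, ← Valuation.map_sub_swap]
    rw [div_lt_iff₀ (lt_of_le_of_ne zero_le' (Ne.symm (by simpa using hπ0))), one_mul]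
    exact hlt
  rw [← aux_residue_eq_zero_iff w] at hsub
  rwa [map_sub, map_pow, sub_eq_zero] at hsub

/-- Lifting linear independence from the residue field extension to the field extension. -/
lemma aux_lift_li {K L : Type*} [Field K] [Field L] [Algebra K L]
    (v : Valuation K ℤᵐ⁰) (w : Valuation L ℤᵐ⁰)
    [Algebra v.integer w.integer] [IsLocalHom (algebraMap v.integer w.integer)]
    (hcoe : ∀ d : v.integer,
      ((algebraMap v.integer w.integer d : w.integer) : L) = algebraMap K L (d : K))
    {m : ℕ} (x : Fin m → w.integer)
    (hli : LinearIndependent (ResidueField v.integer) (fun i => residue w.integer (x i))) :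
    LinearIndependent K (fun i => (x i : L)) := by
  rw [Fintype.linearIndependent_iff] at hli ⊢
  intro g hg
  by_contra hne
  push_neg at hne
  obtain ⟨i₀, hi₀⟩ := hne
  obtain ⟨j, -, hjmax⟩ := Finset.exists_max_image Finset.univ (fun i => v (g i))
    ⟨i₀, Finset.mem_univ _⟩
  have hgj : g j ≠ 0 := by
    intro h0
    have := hjmax i₀ (Finset.mem_univ _)
    rw [h0, Valuation.map_zero, le_zero_iff, Valuation.zero_iff] at this
    exact hi₀ this
  have hvgj : v (g j) ≠ 0 := by simpa using hgj
  have hd : ∀ i, v (g i / g j) ≤ 1 := fun i => by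
    rw [Valuation.map_div, div_le_one₀ (lt_of_le_of_ne zero_le' (Ne.symm hvgj))]
    exact hjmax i (Finset.mem_univ _)
  set D : Fin m → v.integer := fun i => ⟨g i / g j, hd i⟩ with hD
  have hsum : (∑ i, algebraMap v.integer w.integer (D i) * x i) = 0 := by
    apply Subtype.ext
    push_cast
    calc (∑ i, ((algebraMap v.integer w.integer (D i) : w.integer) : L) * (x i : L))
        = ∑ i, algebraMap K L (g i / g j) * (x i : L) := by
          refine Finset.sum_congr rfl fun i _ => by rw [hcoe]
      _ = algebraMap K L (g j)⁻¹ * ∑ i, algebraMap K L (g i) * (x i : L) := by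
          rw [Finset.mul_sum]
          refine Finset.sum_congr rfl fun i _ => by
            rw [div_eq_mul_inv, map_mul, mul_comm (algebraMap K L (g i)), mul_assoc]
      _ = 0 := by
          have : (∑ i, algebraMap K L (g i) * (x i : L)) = 0 := by
            rw [← hg]
            exact Finset.sum_congr rfl fun i _ => (Algebra.smul_def _ _).symm
          rw [this, mul_zero]
  have hres : ∑ i, residue v.integer (D i) • residue w.integer (x i) = 0 := by
    have h0 := congrArg (residue w.integer) hsum
    rw [map_sum, map_zero] at h0
    rw [← h0]
    refine Finset.sum_congr rfl fun i _ => ?_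
    rw [Algebra.smul_def, map_mul]
    congr 1
  have hall := hli (fun i => residue v.integer (D i)) hres
  have hDj : D j = 1 := by
    apply Subtype.ext
    simp [hD, div_self hgj]
  have h2 : residue v.integer (D j) = 0 := hall j
  rw [hDj, map_one] at h2
  exact one_ne_zero h2

/-- The minimal polynomial of a `p`-th root of an element that is not a `p`-th power. -/
lemma aux_minpoly_root {k k' : Type*} [Field k] [Field k'] [Algebra k k'] {p : ℕ}
    (hp : p.Prime) (c : k) (hc : ∀ y : k, y ^ p ≠ c) (z : k') (hz : z ^ p = algebraMap k k' c) :
    minpoly k z = Polynomial.X ^ p - Polynomial.C c := by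
  refine (minpoly.eq_of_irreducible_of_monic (X_pow_sub_C_irreducible_of_prime hp hc) ?_
    (Polynomial.monic_X_pow_sub_C c hp.ne_zero)).symm
  simp [hz]

lemma aux_residue_structure {k k' : Type*} [Field k] [Field k'] [Algebra k k'] {p : ℕ}
    (hp : p.Prime) [CharP k p] (c : k) (hc : ∀ y : k, y ^ p ≠ c)
    (z : k') (hz : z ^ p = algebraMap k k' c)
    (hspan : ∀ ξ : k', ξ ∈ Submodule.span k (Set.range fun i : Fin p => z ^ (i : ℕ))) :
    IsPurelyInseparable k k' ∧ Module.finrank k k' = p := by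
  haveI : CharP k' p := charP_of_injective_algebraMap (algebraMap k k').injective p
  haveI : ExpChar k p := ExpChar.prime hp
  haveI : ExpChar k' p := ExpChar.prime hp
  have hdeg : (minpoly k z).natDegree = p := by
    rw [aux_minpoly_root hp c hc z hz, Polynomial.natDegree_X_pow_sub_C]
  have hli : LinearIndependent k (fun i : Fin p => z ^ (i : ℕ)) := by
    have := linearIndependent_pow (K := k) z
    rwa [hdeg] at this
  constructor
  · rw [isPurelyInseparable_iff_pow_mem k p]
    intro ξ
    obtain ⟨co, hco⟩ := (Submodule.mem_span_range_iff_exists_fun k).mp (hspan ξ)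
    refine ⟨1, ⟨∑ i : Fin p, co i ^ p * c ^ (i : ℕ), ?_⟩⟩
    rw [map_sum, pow_one, ← hco, sum_pow_char]
    refine Finset.sum_congr rfl fun i _ => ?_
    rw [smul_pow, ← pow_mul, mul_comm (i : ℕ) p, pow_mul, hz, ← map_pow, Algebra.smul_def,
      map_mul]
  · have hb : Module.Basis (Fin p) k k' := Module.Basis.mk hli (by
      rw [top_le_iff, eq_top_iff]
      intro ξ _
      exact hspan ξ)
    rw [Module.finrank_eq_card_basis hb, Fintype.card_fin]

/-- Lemma 3.2(b). Mixed characteristic Henselian discrete valued field,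
`π = λ − 1` with `v(π) > 0`, `(p−1)·v(π) < p·v(p)` and `π = π₁^p · a` for a unit `a` of the
valuation ring whose residue is not a `p`-th power.  Then `λ ∉ K^{*p}`, and for
`K′ = K(λ^{1/p})` the residue `â` becomes a `p`-th power in `K̂′` and `K̂′/K̂` is purely
inseparable of degree `p`. -/
theorem b_normal_gives_purely_inseparable_residue
    {K : Type} [Field K]
    (p : ℕ) (hp : p.Prime)
    (v : Valuation K ℤᵐ⁰)
    (hdisc : Function.Surjective v)
    (hhens : HenselianLocalRing v.integer)
    [CharZero K]
    [CharP (IsLocalRing.ResidueField v.integer) p]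
    (lam : K) (hlam : v (lam - 1) < 1)
    (hbound : v (p : K) ^ p < v (lam - 1) ^ (p - 1))
    (π₁ : K) (a : v.integer) (ha : IsUnit a)
    (hfac : lam - 1 = π₁ ^ p * (a : K))
    (hares : ∀ y : IsLocalRing.ResidueField v.integer,
      y ^ p ≠ IsLocalRing.residue v.integer a) :
    (¬ ∃ z : K, z ^ p = lam) ∧
    ∀ (K' : Type) [Field K'] [Algebra K K'] (lam' : K'),
      lam' ^ p = algebraMap K K' lam →
      IntermediateField.adjoin K {lam'} = ⊤ →
      ∀ (w : Valuation K' ℤᵐ⁰) [Valuation.HasExtension v w],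
        (∀ x : K, w (algebraMap K K' x) = v x) →
        (∃ y : IsLocalRing.ResidueField w.integer,
          y ^ p = algebraMap (IsLocalRing.ResidueField v.integer)
            (IsLocalRing.ResidueField w.integer) (IsLocalRing.residue v.integer a)) ∧
        IsPurelyInseparable (IsLocalRing.ResidueField v.integer)
          (IsLocalRing.ResidueField w.integer) ∧
        Module.finrank (IsLocalRing.ResidueField v.integer)
          (IsLocalRing.ResidueField w.integer) = p := by
  have hpm1 : p - 1 ≠ 0 := Nat.sub_ne_zero_of_lt hp.one_lt
  have hπ0 : lam - 1 ≠ 0 := by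
    intro h
    rw [h, Valuation.map_zero, zero_pow hpm1] at hbound
    exact absurd hbound (zero_le').not_gt
  have hva : v (a : K) = 1 :=
    (Valuation.integer.integers (v := v)).one_of_isUnit ha
  -- Part 1
  have hnot : ¬ ∃ z : K, z ^ p = lam := by
    rintro ⟨z, hz⟩
    have hwt : v (z - 1) < 1 := aux_t_small hp v lam z hlam hz
    have hkey := aux_key hp v lam (z - 1) (by rw [add_sub_cancel, hz]) hbound hwt
    obtain ⟨U, hU, -⟩ := aux_exists_res_pow hp.pos v (lam - 1) π₁ (z - 1) a hva hfac hπ0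
      hkey.1 hkey.2
    exact hares (residue v.integer U) hU
  refine ⟨hnot, ?_⟩
  intro K' _ _ lam' hlam' hadj w _ hcomp
  have hnotfun : ∀ b : K, b ^ p ≠ lam := fun b hb => hnot ⟨b, hb⟩
  haveI : CharP (ResidueField w.integer) p :=
    charP_of_injective_algebraMap
      (algebraMap (ResidueField v.integer) (ResidueField w.integer)).injective p
  have hμsub : algebraMap K K' lam - 1 = algebraMap K K' (lam - 1) := by
    rw [map_sub, map_one]
  have hwt : w (lam' - 1) < 1 := by
    refine aux_t_small hp w (algebraMap K K' lam) lam' ?_ hlam'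
    rw [hμsub, hcomp]; exact hlam
  have hb' : w (p : K') ^ p < w (algebraMap K K' lam - 1) ^ (p - 1) := by
    rw [hμsub, hcomp, ← map_natCast (algebraMap K K') p, hcomp]
    exact hbound
  have hkey := aux_key hp w (algebraMap K K' lam) (lam' - 1)
    (by rw [add_sub_cancel, hlam']) hb' hwt
  set b : w.integer := algebraMap v.integer w.integer a with hbdef
  have hcoeb : (b : K') = algebraMap K K' (a : K) := Valuation.HasExtension.val_algebraMap (vR := v) a
  have hwb : w (b : K') = 1 := by rw [hcoeb, hcomp, hva]
  have hfacw : algebraMap K K' lam - 1 = (algebraMap K K' π₁) ^ p * (b : K') := by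
    rw [hμsub, hfac, map_mul, map_pow, hcoeb]
  have hπ0' : algebraMap K K' lam - 1 ≠ 0 := by
    rw [hμsub]
    exact (map_ne_zero _).mpr hπ0
  obtain ⟨U, hU, hwU⟩ := aux_exists_res_pow hp.pos w (algebraMap K K' lam - 1)
    (algebraMap K K' π₁) (lam' - 1) b hwb hfacw hπ0' hkey.1 hkey.2
  have hUy : residue w.integer U ^ p
      = algebraMap (ResidueField v.integer) (ResidueField w.integer)
        (residue v.integer a) := by
    rw [hU, hbdef]
    exact (IsLocalRing.ResidueField.map_residue (algebraMap v.integer w.integer) a).symm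
  -- finrank K K' = p
  have hmin : minpoly K lam' = Polynomial.X ^ p - Polynomial.C lam :=
    aux_minpoly_root hp lam hnotfun lam' hlam'
  have hint : IsIntegral K lam' := by
    refine ⟨Polynomial.X ^ p - Polynomial.C lam, Polynomial.monic_X_pow_sub_C _ hp.ne_zero, ?_⟩
    simp [Polynomial.eval₂_sub, hlam']
  have hfr : Module.finrank K K' = p := by
    have h1 := IntermediateField.adjoin.finrank hint
    rw [hmin, Polynomial.natDegree_X_pow_sub_C] at h1
    rw [← IntermediateField.finrank_top' (F := K) (E := K'), ← hadj]
    exact h1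
  haveI : FiniteDimensional K K' := FiniteDimensional.of_finrank_pos (by rw [hfr]; exact hp.pos)
  -- the minimal polynomial of the residue of U
  have hlipow : LinearIndependent (ResidueField v.integer)
      (fun i : Fin p => residue w.integer U ^ (i : ℕ)) := by
    have hdeg : (minpoly (ResidueField v.integer) (residue w.integer U)).natDegree = p := by
      rw [aux_minpoly_root hp (residue v.integer a) hares (residue w.integer U) hUy,
        Polynomial.natDegree_X_pow_sub_C]
    have := linearIndependent_pow (K := ResidueField v.integer) (residue w.integer U)
    rwa [hdeg] at this
  -- spanning
  have hspan : ∀ ξ : ResidueField w.integer,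
      ξ ∈ Submodule.span (ResidueField v.integer)
        (Set.range fun i : Fin p => residue w.integer U ^ (i : ℕ)) := by
    intro ξ
    by_contra hξ
    obtain ⟨X0, hX0⟩ := IsLocalRing.residue_surjective (R := w.integer) ξ
    set F : Fin (p + 1) → w.integer := Fin.snoc (fun i : Fin p => U ^ (i : ℕ)) X0 with hF
    have hresF : (fun i => residue w.integer (F i))
        = Fin.snoc (fun i : Fin p => residue w.integer U ^ (i : ℕ)) ξ := by
      funext i
      refine Fin.lastCases ?_ (fun j => ?_) i
      · simp [hF, Fin.snoc_last, hX0]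
      · simp [hF, Fin.snoc_castSucc, map_pow]
    have hliR : LinearIndependent (ResidueField v.integer)
        (fun i => residue w.integer (F i)) := by
      rw [hresF, linearIndependent_fin_snoc]
      exact ⟨hlipow, hξ⟩
    have hliK : LinearIndependent K (fun i => (F i : K')) :=
      aux_lift_li v w (fun d => Valuation.HasExtension.val_algebraMap (vR := v) d) F hliR
    have hcard := hliK.fintype_card_le_finrank
    rw [Fintype.card_fin, hfr] at hcard
    omega
  have hstruct := aux_residue_structure hp (residue v.integer a) hares
    (residue w.integer U) hUy hspan
  exact ⟨⟨residue w.integer U, hUy⟩, hstruct.1, hstruct.2⟩
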